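/- A Banach space X has property U in its bidual X** if and only if the natural projection π_X : X*** → X*** satisfies: for every x*** ∈ X***, ‖π_X x***‖ = ‖x***‖ implies π_X x*** = x***. -/

import Mathlib

open NormedSpace

/-- The topological dual `E →L[𝕜] 𝕜` (the former Mathlib `NormedSpace.Dual`). -/
abbrev NormedSpace.Dual (𝕜 : Type*) [NontriviallyNormedField 𝕜] (E : Type*)
    [SeminormedAddCommGroup E] [NormedSpace 𝕜 E] : Type _ :=
  StrongDual 𝕜 E

/-- The adjoint `T* : X* → Y*` of a bounded operator `T : Y → X`. -/
noncomputable def adj {Y X : Type*} [SeminormedAddCommGroup Y] [NormedSpace ℝ Y]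
    [SeminormedAddCommGroup X] [NormedSpace ℝ X] (T : Y →L[ℝ] X) :
    Dual ℝ X →L[ℝ] Dual ℝ Y :=
  LinearMap.mkContinuous
    { toFun := fun f => f.comp T
      map_add' := fun f g => by ext y; simp
      map_smul' := fun c f => by ext y; simp }
    ‖T‖ (fun f => by simpa [mul_comm] using f.opNorm_comp_le T)

/-- The natural projection `π_X : X*** → X***` onto `X*`. -/
noncomputable def piX (X : Type*) [SeminormedAddCommGroup X] [NormedSpace ℝ X] :
    Dual ℝ (Dual ℝ (Dual ℝ X)) →L[ℝ] Dual ℝ (Dual ℝ (Dual ℝ X)) :=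
  (inclusionInDoubleDual ℝ (Dual ℝ X)).comp (adj (inclusionInDoubleDual ℝ X))

/-- The triple adjoint `T*** : X*** → Y***` of `T : Y → X`. -/
noncomputable def adj3 {Y X : Type*} [SeminormedAddCommGroup Y] [NormedSpace ℝ Y]
    [SeminormedAddCommGroup X] [NormedSpace ℝ X] (T : Y →L[ℝ] X) :
    Dual ℝ (Dual ℝ (Dual ℝ X)) →L[ℝ] Dual ℝ (Dual ℝ (Dual ℝ Y)) :=
  adj (adj (adj T))

lemma adj_apply {Y X : Type*} [SeminormedAddCommGroup Y] [NormedSpace ℝ Y]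
    [SeminormedAddCommGroup X] [NormedSpace ℝ X] (T : Y →L[ℝ] X) (f : Dual ℝ X) :
    adj T f = f.comp T := rfl

lemma norm_incl {E : Type*} [NormedAddCommGroup E] [NormedSpace ℝ E] (x : E) :
    ‖inclusionInDoubleDual ℝ E x‖ = ‖x‖ :=
  (inclusionInDoubleDualLi ℝ (E := E)).norm_map x

lemma piX_apply {X : Type*} [SeminormedAddCommGroup X] [NormedSpace ℝ X]
    (F : Dual ℝ (Dual ℝ (Dual ℝ X))) :
    piX X F = inclusionInDoubleDual ℝ (Dual ℝ X) (adj (inclusionInDoubleDual ℝ X) F) := rfl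

lemma norm_piX {X : Type*} [NormedAddCommGroup X] [NormedSpace ℝ X]
    (F : Dual ℝ (Dual ℝ (Dual ℝ X))) :
    ‖piX X F‖ = ‖adj (inclusionInDoubleDual ℝ X) F‖ := by
  rw [piX_apply, norm_incl]

/-- `X` has property U in `X**` iff `‖π_X x***‖ = ‖x***‖` implies `π_X x*** = x***`. -/
theorem property_U_iff_SU (X : Type*) [NormedAddCommGroup X]
    [NormedSpace ℝ X] [CompleteSpace X] :
    (∀ f : Dual ℝ X, ∃! F : Dual ℝ (Dual ℝ (Dual ℝ X)),
        (∀ x : X, F (inclusionInDoubleDual ℝ X x) = f x) ∧ ‖F‖ = ‖f‖) ↔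
    (∀ F : Dual ℝ (Dual ℝ (Dual ℝ X)), ‖piX X F‖ = ‖F‖ → piX X F = F) := by
  constructor
  · intro hU F hnorm
    set f : Dual ℝ X := adj (inclusionInDoubleDual ℝ X) F with hf
    have hnf : ‖piX X F‖ = ‖f‖ := norm_piX F
    obtain ⟨G, _, hGuniq⟩ := hU f
    have h1 : (∀ x : X, piX X F (inclusionInDoubleDual ℝ X x) = f x) ∧ ‖piX X F‖ = ‖f‖ :=
      ⟨fun x => rfl, hnf⟩
    have h2 : (∀ x : X, F (inclusionInDoubleDual ℝ X x) = f x) ∧ ‖F‖ = ‖f‖ :=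
      ⟨fun x => rfl, by rw [← hnorm, hnf]⟩
    rw [hGuniq _ h1, hGuniq _ h2]
  · intro hSU f
    refine ⟨inclusionInDoubleDual ℝ (Dual ℝ X) f, ⟨fun x => rfl, norm_incl f⟩, ?_⟩
    rintro G ⟨hext, hnorm⟩
    have hcomp : adj (inclusionInDoubleDual ℝ X) G = f := by
      ext x; exact hext x
    have hpi : piX X G = inclusionInDoubleDual ℝ (Dual ℝ X) f := by
      rw [piX_apply, hcomp]
    have : ‖piX X G‖ = ‖G‖ := by
      rw [hpi, norm_incl, hnorm]
    rw [← hSU G this, hpi]
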